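/- Let G be a finite simple connected graph in which every cycle contains at least 3 vertices of degree at least 3 (degrees in G), every vertex has degree at least 1, at least two vertices have degree 1, and every path joining two vertices of degree 1 contains at least 2 vertices of degree at least 3. Then G is not a tree. -/

import Mathlib

open SimpleGraph

section Aux
variable {V : Type*} [DecidableEq V] {G : SimpleGraph V}

/-- In a tree, every path realizes the distance. -/
lemma tree_path_length_eq_dist (hT : G.IsTree) {u v : V} (p : G.Walk u v)
    (hp : p.IsPath) : p.length = G.dist u v := by
  obtain ⟨q, hq⟩ := hT.isConnected.exists_walk_length_eq_dist u v
  have h1 : G.dist u v ≤ q.bypass.length := dist_le _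
  have h2 : q.bypass.length ≤ q.length := Walk.length_bypass_le _
  have hbp : q.bypass.length = G.dist u v := le_antisymm (hq ▸ h2) h1
  obtain ⟨r, hr, hun⟩ := hT.existsUnique_path u v
  have : p = q.bypass := (hun p hp).trans (hun q.bypass q.bypass_isPath).symm
  rw [this, hbp]

lemma tree_adj_dist (hT : G.IsTree) (a : V) {w z : V} (h : G.Adj w z) :
    G.dist a z = G.dist a w + 1 ∨ G.dist a z + 1 = G.dist a w := by
  obtain ⟨P, hP, -⟩ := hT.existsUnique_path a w
  by_cases hz : z ∈ P.support
  · right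
    have hlen : (P.takeUntil z hz).length + (P.dropUntil z hz).length = P.length := by
      have := congr_arg Walk.length (P.take_spec hz)
      rwa [Walk.length_append] at this
    have h1 : (P.takeUntil z hz).length = G.dist a z :=
      tree_path_length_eq_dist hT _ (hP.takeUntil hz)
    have h2 : (P.dropUntil z hz).length = G.dist z w :=
      tree_path_length_eq_dist hT _ (hP.dropUntil hz)
    have h3 : G.dist z w = 1 := by
      have : (Walk.cons h.symm Walk.nil : G.Walk z w).length = G.dist z w :=
        tree_path_length_eq_dist hT _ (by simp [Walk.isPath_def, h.ne'])
      simpa using this.symm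
    have h4 : P.length = G.dist a w := tree_path_length_eq_dist hT _ hP
    omega
  · left
    have hcons : (Walk.cons (h.symm) P.reverse : G.Walk z a).IsPath := by
      rw [Walk.cons_isPath_iff]
      exact ⟨hP.reverse, by simpa using hz⟩
    have := tree_path_length_eq_dist hT _ hcons
    rw [Walk.length_cons, Walk.length_reverse] at this
    have h4 : P.length = G.dist a w := tree_path_length_eq_dist hT _ hP
    rw [dist_comm (G := G) (u := a) (v := z), ← this, h4]

/-- In a tree, a vertex has at most one neighbor not farther from `a`. -/
lemma tree_unique_down (hT : G.IsTree) (a : V) {w z₁ z₂ : V}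
    (h1 : G.Adj w z₁) (h2 : G.Adj w z₂)
    (d1 : ¬ G.dist a w < G.dist a z₁) (d2 : ¬ G.dist a w < G.dist a z₂) :
    z₁ = z₂ := by
  have e1 : G.dist a z₁ + 1 = G.dist a w := by
    rcases tree_adj_dist hT a h1 with h | h; · omega
    · exact h
  have e2 : G.dist a z₂ + 1 = G.dist a w := by
    rcases tree_adj_dist hT a h2 with h | h; · omega
    · exact h
  obtain ⟨q1, hq1, -⟩ := hT.existsUnique_path a z₁
  obtain ⟨q2, hq2, -⟩ := hT.existsUnique_path a z₂
  have l1 : q1.length = G.dist a z₁ := tree_path_length_eq_dist hT _ hq1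
  have l2 : q2.length = G.dist a z₂ := tree_path_length_eq_dist hT _ hq2
  have hw1 : w ∉ q1.support := by
    intro hw
    have := tree_path_length_eq_dist hT _ (hq1.takeUntil hw)
    have := q1.length_takeUntil_le hw
    omega
  have hw2 : w ∉ q2.support := by
    intro hw
    have := tree_path_length_eq_dist hT _ (hq2.takeUntil hw)
    have := q2.length_takeUntil_le hw
    omega
  have hc1 : (Walk.cons h1 q1.reverse : G.Walk w a).IsPath := by
    rw [Walk.cons_isPath_iff]
    exact ⟨hq1.reverse, by simpa using hw1⟩
  have hc2 : (Walk.cons h2 q2.reverse : G.Walk w a).IsPath := by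
    rw [Walk.cons_isPath_iff]
    exact ⟨hq2.reverse, by simpa using hw2⟩
  obtain ⟨r, -, hun⟩ := hT.existsUnique_path w a
  have heq : (Walk.cons h1 q1.reverse : G.Walk w a) = Walk.cons h2 q2.reverse :=
    (hun _ hc1).trans (hun _ hc2).symm
  have := congr_arg (fun p : G.Walk w a => p.getVert 1) heq
  simpa [Walk.getVert_cons_succ] using this

variable [Fintype V] [DecidableRel G.Adj]

/-- Descend from a vertex strictly beyond the farthest branch vertex to a leaf. -/
lemma tree_descend (hT : G.IsTree) (a w : V) (hmin : ∀ v : V, 1 ≤ G.degree v)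
    (hmax : ∀ v : V, 3 ≤ G.degree v → G.dist a v ≤ G.dist a w) :
    ∀ (n : ℕ) (z : V), Fintype.card V ≤ G.dist a z + n → G.dist a w < G.dist a z →
      ∃ (x : V) (p : G.Walk z x), p.IsPath ∧ G.degree x = 1 ∧
        ∀ v ∈ p.support, G.dist a z ≤ G.dist a v := by
  intro n
  induction n with
  | zero =>
    intro z hcard _
    obtain ⟨P, hP, -⟩ := hT.existsUnique_path a z
    have h1 : P.length = G.dist a z := tree_path_length_eq_dist hT _ hP
    have h2 : P.length < Fintype.card V := hP.length_lt
    omega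
  | succ n ih =>
    intro z hcard hz
    have hdeg2 : G.degree z ≤ 2 := by
      by_contra hd
      exact absurd (hmax z (by omega)) (by omega)
    rcases Nat.lt_or_ge (G.degree z) 2 with hd1 | hd2
    · -- degree 1: z is a leaf
      have : G.degree z = 1 := le_antisymm (by omega) (hmin z)
      exact ⟨z, Walk.nil, by simp [Walk.isPath_def], this, by simp⟩
    · have hdeg : G.degree z = 2 := le_antisymm hdeg2 hd2
      -- find the neighbor towards a
      have hza : z ≠ a := by
        intro h; subst h; rw [SimpleGraph.dist_self] at hz; omega
      have hdpos : 0 < G.dist z a := by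
        rw [dist_comm (G := G)]; omega
      obtain ⟨P, hP⟩ := hT.isConnected.exists_walk_length_eq_dist z a
      obtain ⟨u₀, q, h0, rfl⟩ : ∃ (u₀ : V) (q : G.Walk u₀ a) (h : G.Adj z u₀),
          P = Walk.cons h q := by
        cases P with
        | nil => rw [SimpleGraph.dist_self] at hz; omega
        | cons h q => exact ⟨_, q, h, rfl⟩
      have hu0 : G.dist a u₀ < G.dist a z := by
        have : G.dist u₀ a ≤ q.length := dist_le q
        rw [Walk.length_cons] at hP
        rw [dist_comm (G := G) (u := a) (v := u₀), dist_comm (G := G) (u := a) (v := z), ← hP]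
        omega
      -- the other neighbor
      have hmem0 : u₀ ∈ G.neighborFinset z := by
        rw [mem_neighborFinset]; exact h0
      obtain ⟨u, humem, hune⟩ : ∃ u, u ∈ G.neighborFinset z ∧ u ≠ u₀ :=
        Finset.exists_mem_ne (by rw [card_neighborFinset_eq_degree, hdeg]; omega) u₀
      rw [mem_neighborFinset] at humem
      have hu : G.dist a z < G.dist a u := by
        by_contra hlt
        exact hune (tree_unique_down hT a humem h0 hlt (by omega))
      have hule : G.dist a u ≤ G.dist a z + 1 := by
        have h1 : G.dist z u = 1 := by
          have : (Walk.cons humem Walk.nil : G.Walk z u).length = G.dist z u :=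
            tree_path_length_eq_dist hT _ (by simp [Walk.isPath_def, humem.ne])
          simpa using this.symm
        have := hT.isConnected.dist_triangle (u := a) (v := z) (w := u)
        omega
      have huz : G.dist a u = G.dist a z + 1 := by omega
      obtain ⟨x, p, hp, hx, hsup⟩ := ih u (by omega) (by omega)
      refine ⟨x, Walk.cons humem p, ?_, hx, ?_⟩
      · rw [Walk.cons_isPath_iff]
        refine ⟨hp, fun hzp => ?_⟩
        have := hsup z hzp
        omega
      · intro v hv
        rw [Walk.support_cons, List.mem_cons] at hv
        rcases hv with rfl | hv
        · exact le_refl _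
        · have := hsup v hv; omega
end Aux

/-- A connected graph in which every cycle has at least 3 vertices of degree ≥ 3,
every vertex has degree ≥ 1, there are at least two vertices of degree 1, and every
path joining two degree-1 vertices contains at least 2 vertices of degree ≥ 3,
is not a tree. -/
theorem not_tree_of_branching_conditions {V : Type*} [Fintype V] [DecidableEq V]
    (G : SimpleGraph V) [DecidableRel G.Adj] (hconn : G.Connected)
    (hcyc : ∀ (a : V) (c : G.Walk a a), c.IsCycle →
      3 ≤ (c.support.toFinset.filter fun v => 3 ≤ G.degree v).card)
    (hmin : ∀ v : V, 1 ≤ G.degree v)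
    (hleaves : ∃ a b : V, a ≠ b ∧ G.degree a = 1 ∧ G.degree b = 1)
    (hpaths : ∀ (a b : V) (p : G.Walk a b), a ≠ b → G.degree a = 1 → G.degree b = 1 →
      p.IsPath → 2 ≤ (p.support.toFinset.filter fun v => 3 ≤ G.degree v).card) :
    ¬ G.IsTree := by
  intro hT
  obtain ⟨a, b, hab, ha, hb⟩ := hleaves
  -- there is a branch vertex
  have hBne : (Finset.univ.filter fun v => 3 ≤ G.degree v).Nonempty := by
    obtain ⟨p0⟩ := hconn a b
    have h2 := hpaths a b p0.bypass hab ha hb p0.bypass_isPath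
    have hpos : 0 < (p0.bypass.support.toFinset.filter fun v => 3 ≤ G.degree v).card := by
      omega
    obtain ⟨v, hv⟩ := Finset.card_pos.mp hpos
    rw [Finset.mem_filter] at hv
    exact ⟨v, Finset.mem_filter.mpr ⟨Finset.mem_univ v, hv.2⟩⟩
  -- pick branch vertex at max distance from a
  obtain ⟨w, hwB, hwmax⟩ := Finset.exists_max_image _ (fun v => G.dist a v) hBne
  rw [Finset.mem_filter] at hwB
  have hwdeg : 3 ≤ G.degree w := hwB.2
  have hmax : ∀ v : V, 3 ≤ G.degree v → G.dist a v ≤ G.dist a w := fun v hv =>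
    hwmax v (Finset.mem_filter.mpr ⟨Finset.mem_univ v, hv⟩)
  -- two neighbors of w beyond w
  set d := G.dist a w with hd
  have hT2 : 2 ≤ ((G.neighborFinset w).filter fun z => d < G.dist a z).card := by
    have hsub : ((G.neighborFinset w).filter fun z => ¬ d < G.dist a z).card ≤ 1 := by
      rw [Finset.card_le_one]
      intro z1 hz1 z2 hz2
      rw [Finset.mem_filter, mem_neighborFinset] at hz1 hz2
      exact tree_unique_down hT a hz1.1 hz2.1 hz1.2 hz2.2
    have := Finset.card_filter_add_card_filter_not
      (s := G.neighborFinset w) (p := fun z => d < G.dist a z)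
    rw [card_neighborFinset_eq_degree] at this
    omega
  obtain ⟨z1, hz1, z2, hz2, hzne⟩ := Finset.one_lt_card.mp (lt_of_lt_of_le one_lt_two hT2)
  rw [Finset.mem_filter, mem_neighborFinset] at hz1 hz2
  -- descend to two leaves
  have hcard : ∀ z : V, d < G.dist a z →
      Fintype.card V ≤ G.dist a z + (Fintype.card V - G.dist a z) := by
    intro z hz; omega
  obtain ⟨x, p1, hp1, hx, hs1⟩ := tree_descend hT a w hmin hmax
    (Fintype.card V - G.dist a z1) z1 (by omega) hz1.2
  obtain ⟨y, p2, hp2, hy, hs2⟩ := tree_descend hT a w hmin hmax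
    (Fintype.card V - G.dist a z2) z2 (by omega) hz2.2
  -- the chains from w
  have hwp1 : w ∉ p1.support := fun h => by have := hs1 w h; omega
  have hwp2 : w ∉ p2.support := fun h => by have := hs2 w h; omega
  have hc1 : (Walk.cons hz1.1 p1 : G.Walk w x).IsPath :=
    (Walk.cons_isPath_iff _ _).mpr ⟨hp1, hwp1⟩
  have hc2 : (Walk.cons hz2.1 p2 : G.Walk w y).IsPath :=
    (Walk.cons_isPath_iff _ _).mpr ⟨hp2, hwp2⟩
  -- x ≠ y
  have hxy : x ≠ y := by
    rintro rfl
    obtain ⟨r, -, hun⟩ := hT.existsUnique_path w x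
    have heq : (Walk.cons hz1.1 p1 : G.Walk w x) = Walk.cons hz2.1 p2 :=
      (hun _ hc1).trans (hun _ hc2).symm
    have := congr_arg (fun p : G.Walk w x => p.getVert 1) heq
    simp only [Walk.getVert_cons_succ, Walk.getVert_zero] at this
    exact hzne this
  -- combined walk and its bypass
  set q : G.Walk x y := (Walk.cons hz1.1 p1).reverse.append (Walk.cons hz2.1 p2) with hq
  have h2 := hpaths x y q.bypass hxy hx hy q.bypass_isPath
  have hsub : (q.bypass.support.toFinset.filter fun v => 3 ≤ G.degree v) ⊆ {w} := by
    intro v hv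
    rw [Finset.mem_filter, List.mem_toFinset] at hv
    obtain ⟨hvq, hvdeg⟩ := hv
    have hvq' : v ∈ q.support := q.support_bypass_subset hvq
    rw [hq, Walk.mem_support_append_iff, Walk.support_reverse, List.mem_reverse] at hvq'
    have hvd : G.dist a v ≤ d := hmax v hvdeg
    rcases hvq' with hvq' | hvq' <;>
    · rw [Walk.support_cons, List.mem_cons] at hvq'
      rcases hvq' with rfl | hvq'
      · exact Finset.mem_singleton_self v
      · exfalso
        first
        | (have := hs1 v hvq'; omega)
        | (have := hs2 v hvq'; omega)
  have := Finset.card_le_card hsub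
  rw [Finset.card_singleton] at this
  omega
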